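/- On a bounded Vilenkin group with λ := sup_n m_n, for every nonzero x, sup_{n∈ℕ} |K_n^ψ(x)| ≥ (2πλ|x|)^{-1}, where |x| := M_k^{-1} for x ∈ I_k \ I_{k+1}; consequently the Vilenkin-Fejér kernels do not possess an integrable upper envelope. -/

import Mathlib

open MeasureTheory Filter Complex

/-- The (bounded) Vilenkin group `G_m = ∏_k Z_{m_k}`. -/
abbrev VilGroup (m : ℕ → ℕ) : Type := Π k, ZMod (m k)

/-- The generalized powers `M_0 = 1`, `M_{k+1} = m_k M_k`. -/
def Mgen (m : ℕ → ℕ) : ℕ → ℕ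
  | 0 => 1
  | k + 1 => m k * Mgen m k

/-- The `j`-th digit of `n` in the `M`-adic (mixed radix) number system. -/
def vDigit (m : ℕ → ℕ) (n j : ℕ) : ℕ := (n / Mgen m j) % m j

/-- The generalized Rademacher functions `r_k(x) = exp(2πi x_k / m_k)`. -/
noncomputable def rademacher (m : ℕ → ℕ) (k : ℕ) (x : VilGroup m) : ℂ :=
  Complex.exp (2 * Real.pi * Complex.I * ((x k).val : ℂ) / (m k : ℂ))

/-- The Vilenkin functions `ψ_n = ∏_k r_k^{n_k}`. -/
noncomputable def vilenkin (m : ℕ → ℕ) (n : ℕ) (x : VilGroup m) : ℂ :=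
  ∏ j ∈ Finset.range (n + 1), (rademacher m j x) ^ (vDigit m n j)

/-- The Vilenkin-Dirichlet kernels `D_k^ψ = ∑_{j<k} ψ_j`. -/
noncomputable def vilenkinDirichlet (m : ℕ → ℕ) (k : ℕ) (x : VilGroup m) : ℂ :=
  ∑ j ∈ Finset.range k, vilenkin m j x

/-- The Vilenkin-Fejér kernels `K_n^ψ = (1/n) ∑_{k<n} D_k^ψ`. -/
noncomputable def vilenkinFejer (m : ℕ → ℕ) (n : ℕ) (x : VilGroup m) : ℂ :=
  (1 / n) * ∑ k ∈ Finset.range n, vilenkinDirichlet m k x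

/-- The cylinder `I_N = I_N(0) = {y : y_0 = ⋯ = y_{N-1} = 0}`. -/
def cylV (m : ℕ → ℕ) (N : ℕ) : Set (VilGroup m) := {y | ∀ j < N, y j = 0}

/-- The Vilenkin interval `I_N(x)`. -/
def cylVAt (m : ℕ → ℕ) (N : ℕ) (x : VilGroup m) : Set (VilGroup m) :=
  {y | ∀ j < N, y j = x j}

/-- `μ` is the normalized Haar measure on `G_m`, characterized by
`μ(I_N(x)) = 1/M_N` for every cylinder. -/
def IsVilHaar (m : ℕ → ℕ) (μ : Measure (VilGroup m)) : Prop :=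
  ∀ (N : ℕ) (x : VilGroup m), μ (cylVAt m N x) = (Mgen m N : ENNReal)⁻¹

/-- The `k`-th Vilenkin-Fourier coefficient. -/
noncomputable def vCoef (m : ℕ → ℕ) (μ : Measure (VilGroup m))
    (f : VilGroup m → ℂ) (k : ℕ) : ℂ :=
  ∫ x, f x * (starRingEnd ℂ) (vilenkin m k x) ∂μ

/-- The partial sums `S_n^ψ f` of the Vilenkin-Fourier series. -/
noncomputable def vPartialSum (m : ℕ → ℕ) (μ : Measure (VilGroup m))
    (f : VilGroup m → ℂ) (n : ℕ) (x : VilGroup m) : ℂ :=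
  ∑ k ∈ Finset.range n, vCoef m μ f k * vilenkin m k x

/-- The Vilenkin-Fejér means `σ_n^ψ f = (1/n) ∑_{k<n} S_k^ψ f`. -/
noncomputable def vFejerMean (m : ℕ → ℕ) (μ : Measure (VilGroup m))
    (f : VilGroup m → ℂ) (n : ℕ) (x : VilGroup m) : ℂ :=
  (1 / n) * ∑ k ∈ Finset.range n, vPartialSum m μ f k x

open Finset

variable {m : ℕ → ℕ}

lemma Mgen_pos (hm : ∀ k, 2 ≤ m k) (k : ℕ) : 0 < Mgen m k := by
  induction k with
  | zero => simp [Mgen]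
  | succ k ih => exact Nat.mul_pos (lt_of_lt_of_le two_pos (hm k)) ih

lemma two_pow_le_Mgen (hm : ∀ k, 2 ≤ m k) (k : ℕ) : 2 ^ k ≤ Mgen m k := by
  induction k with
  | zero => simp [Mgen]
  | succ k ih =>
    rw [pow_succ, Nat.mul_comm]
    exact Nat.mul_le_mul (hm k) ih

lemma Mgen_dvd (hm : ∀ k, 2 ≤ m k) {j k : ℕ} (h : j ≤ k) : Mgen m j ∣ Mgen m k := by
  induction k with
  | zero => simp [Nat.le_zero.mp h]
  | succ k ih =>
    rcases Nat.lt_or_ge j (k+1) with h' | h'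
    · exact dvd_mul_of_dvd_right (ih (Nat.lt_succ_iff.mp h')) _
    · have : j = k + 1 := le_antisymm h h'
      simp [this]

lemma vDigit_eq_zero_of_lt {n j : ℕ} (h : n < Mgen m j) : vDigit m n j = 0 := by
  simp [vDigit, Nat.div_eq_of_lt h]

lemma digit_add (hm : ∀ k, 2 ≤ m k) {k : ℕ} (u t j : ℕ) (ht : t < Mgen m (k+1)) :
    vDigit m (u * Mgen m (k+1) + t) j
      = vDigit m (u * Mgen m (k+1)) j + vDigit m t j := by
  rcases Nat.lt_or_ge k j with hj | hj
  · -- k + 1 ≤ j : Mgen m (k+1) ∣ Mgen m j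
    obtain ⟨c, hc⟩ := Mgen_dvd hm hj
    have hM : 0 < Mgen m (k+1) := Mgen_pos hm _
    have htj : t < Mgen m j := lt_of_lt_of_le ht (Nat.le_of_dvd (Mgen_pos hm j) ⟨c, hc⟩)
    have h1 : (u * Mgen m (k+1) + t) / Mgen m j = u * Mgen m (k+1) / Mgen m j := by
      rw [hc, ← Nat.div_div_eq_div_mul, ← Nat.div_div_eq_div_mul, Nat.mul_comm u,
        Nat.mul_add_div hM, Nat.div_eq_of_lt ht, Nat.add_zero, Nat.mul_div_cancel_left _ hM]
    rw [vDigit, vDigit, h1, vDigit_eq_zero_of_lt htj]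
    omega
  · -- j ≤ k : m j * Mgen m j ∣ Mgen m (k+1)
    obtain ⟨c, hc⟩ := Mgen_dvd hm (Nat.succ_le_succ hj) (k := k+1)
    have hMj : 0 < Mgen m j := Mgen_pos hm _
    have h1 : (u * Mgen m (k+1) + t) / Mgen m j = u * (m j * c) + t / Mgen m j := by
      rw [hc]
      show (u * (m j * Mgen m j * c) + t) / Mgen m j = _
      rw [show u * (m j * Mgen m j * c) = u * (m j * c) * Mgen m j by ring,
        Nat.mul_comm (u * (m j * c)), Nat.mul_add_div hMj, Nat.add_comm]
    have h2 : u * Mgen m (k+1) / Mgen m j = u * (m j * c) := by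
      rw [hc]
      show u * (m j * Mgen m j * c) / Mgen m j = _
      rw [show u * (m j * Mgen m j * c) = u * (m j * c) * Mgen m j by ring,
        Nat.mul_div_cancel _ hMj]
    rw [vDigit, vDigit, vDigit, h1, h2,
      show u * (m j * c) = u * c * m j by ring]
    rw [Nat.add_comm, Nat.add_mul_mod_self_right]
    simp [Nat.mul_mod_left]

lemma abs_rademacher (j : ℕ) (x : VilGroup m) : ‖rademacher m j x‖ = 1 := by
  have h : (2 * Real.pi * Complex.I * ((x j).val : ℂ) / (m j : ℂ))
      = ((2 * Real.pi * (x j).val / (m j) : ℝ) : ℂ) * Complex.I := by push_cast; ring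
  rw [rademacher, h, Complex.norm_exp_ofReal_mul_I]

lemma abs_vilenkin (n : ℕ) (x : VilGroup m) : ‖vilenkin m n x‖ = 1 := by
  rw [vilenkin, norm_prod]
  simp [abs_rademacher]

lemma rademacher_pow_m (hm : ∀ k, 2 ≤ m k) (k : ℕ) (x : VilGroup m) :
    (rademacher m k x) ^ (m k) = 1 := by
  rw [rademacher, ← Complex.exp_nat_mul]
  have hm0 : (m k : ℂ) ≠ 0 := Nat.cast_ne_zero.2 (by have := hm k; omega)
  have h : (m k : ℂ) * (2 * Real.pi * Complex.I * ((x k).val : ℂ) / (m k : ℂ))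
      = (((x k).val : ℤ) : ℂ) * (2 * Real.pi * Complex.I) := by
    push_cast; field_simp
  rw [h, Complex.exp_int_mul_two_pi_mul_I]

lemma rademacher_ne_one (hm : ∀ k, 2 ≤ m k) {k : ℕ} {x : VilGroup m} (hxk : x k ≠ 0) :
    rademacher m k x ≠ 1 := by
  haveI : NeZero (m k) := ⟨by have := hm k; omega⟩
  intro h
  rw [rademacher, Complex.exp_eq_one_iff] at h
  obtain ⟨z, hz⟩ := h
  have hm0 : (m k : ℂ) ≠ 0 := Nat.cast_ne_zero.2 (by have := hm k; omega)
  have h2 : (2 * (Real.pi:ℂ) * Complex.I) ≠ 0 := by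
    simp [Real.pi_ne_zero, Complex.I_ne_zero, Complex.ofReal_ne_zero]
  have hv : ((x k).val : ℂ) = z * m k := by
    rw [div_eq_iff hm0] at hz
    have hz' : (2 * (Real.pi:ℂ) * Complex.I) * ((x k).val : ℂ)
        = (2 * (Real.pi:ℂ) * Complex.I) * ((z : ℂ) * m k) := by linear_combination hz
    exact mul_left_cancel₀ h2 hz'
  have hv' : ((x k).val : ℤ) = z * m k := by exact_mod_cast hv
  have h0 : 0 < (x k).val := Nat.pos_of_ne_zero (fun h => hxk ((ZMod.val_eq_zero _).1 h))
  have h1 : (x k).val < m k := ZMod.val_lt _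
  have h0' : (0:ℤ) < ((x k).val : ℤ) := by exact_mod_cast h0
  have h1' : ((x k).val : ℤ) < (m k : ℤ) := by exact_mod_cast h1
  rcases le_or_gt z 0 with hz0 | hz0
  · have : z * (m k : ℤ) ≤ 0 := mul_nonpos_of_nonpos_of_nonneg hz0 (by positivity)
    linarith
  · have : (m k : ℤ) ≤ z * m k := le_mul_of_one_le_left (by positivity) hz0
    linarith

lemma vilenkin_eq_prod (hm : ∀ k, 2 ≤ m k) (n N : ℕ) (hN : n + 1 ≤ N) (x : VilGroup m) :
    vilenkin m n x = ∏ j ∈ Finset.range N, (rademacher m j x) ^ (vDigit m n j) := by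
  rw [vilenkin]
  apply Finset.prod_subset (by simpa using hN)
  intro j hj hj'
  simp only [Finset.mem_range, not_lt] at hj'
  have h1 : n < 2 ^ j := lt_of_lt_of_le (Nat.lt_two_pow_self) (Nat.pow_le_pow_right two_pos (by omega))
  rw [vDigit_eq_zero_of_lt (lt_of_lt_of_le h1 (two_pow_le_Mgen hm j)), pow_zero]

lemma sum_range_mul_comm (f : ℕ → ℂ) (a M : ℕ) :
    ∑ n ∈ Finset.range (a * M), f n
      = ∑ q ∈ Finset.range a, ∑ s ∈ Finset.range M, f (q * M + s) := by
  induction a with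
  | zero => simp
  | succ a ih =>
    rw [Nat.succ_mul, Finset.sum_range_add, ih, Finset.sum_range_succ]

section Context

variable (hm : ∀ k, 2 ≤ m k) {k : ℕ} {x : VilGroup m}
  (hx : ∀ j < k, x j = 0) (hxk : x k ≠ 0)

include hm hx

lemma rademacher_lt_eq_one {j : ℕ} (hj : j < k) : rademacher m j x = 1 := by
  haveI : NeZero (m j) := ⟨by have := hm j; omega⟩
  rw [rademacher, hx j hj]
  simp

/-- Key splitting: `ψ_{u M_{k+1} + t}(x) = ψ_{u M_{k+1}}(x) · r_k(x)^{t / M_k}`. -/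
lemma vilenkin_split (u t : ℕ) (ht : t < Mgen m (k+1)) :
    vilenkin m (u * Mgen m (k+1) + t) x
      = vilenkin m (u * Mgen m (k+1)) x * (rademacher m k x) ^ (t / Mgen m k) := by
  set N := max (u * Mgen m (k+1) + t + 1) (k + 1) with hN
  have hkN : k ∈ Finset.range N := Finset.mem_range.2 (lt_of_lt_of_le (Nat.lt_succ_self k) (le_max_right _ _))
  rw [vilenkin_eq_prod hm _ N (le_max_left _ _) x,
    vilenkin_eq_prod hm (u * Mgen m (k+1)) N (by omega) x]
  have hcongr : ∀ j ∈ Finset.range N,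
      (rademacher m j x) ^ (vDigit m (u * Mgen m (k+1) + t) j)
        = (rademacher m j x) ^ (vDigit m (u * Mgen m (k+1)) j)
          * (rademacher m j x) ^ (vDigit m t j) := by
    intro j _
    rw [digit_add hm u t j ht, pow_add]
  rw [Finset.prod_congr rfl hcongr, Finset.prod_mul_distrib]
  congr 1
  rw [Finset.prod_eq_single_of_mem k hkN]
  · congr 1
    rw [vDigit, Nat.mod_eq_of_lt]
    rw [Nat.div_lt_iff_lt_mul (Mgen_pos hm k)]
    have ht' : t < m k * Mgen m k := ht
    omega
  · intro j _ hne
    rcases lt_or_gt_of_ne hne with h | h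
    · rw [rademacher_lt_eq_one hm hx h, one_pow]
    · have : t < Mgen m j := lt_of_lt_of_le ht (Nat.le_of_dvd (Mgen_pos hm j) (Mgen_dvd hm h))
      rw [vDigit_eq_zero_of_lt this, pow_zero]

end Context

/-- Auxiliary kernel `W b = ∑_{i<b} r_k(x)^{i / M_k}`. -/
noncomputable def Wker (m : ℕ → ℕ) (k : ℕ) (x : VilGroup m) (b : ℕ) : ℂ :=
  ∑ i ∈ Finset.range b, (rademacher m k x) ^ (i / Mgen m k)

section Context2

variable (hm : ∀ k, 2 ≤ m k) {k : ℕ} {x : VilGroup m}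
  (hx : ∀ j < k, x j = 0) (hxk : x k ≠ 0)

lemma geom_sum_m (hm : ∀ k, 2 ≤ m k) (hxk : x k ≠ 0) :
    ∑ i ∈ Finset.range (m k), (rademacher m k x) ^ i = 0 := by
  rw [geom_sum_eq (rademacher_ne_one hm hxk), rademacher_pow_m hm]
  simp

lemma Wker_split (hm : ∀ k, 2 ≤ m k) (q s : ℕ) (hs : s ≤ Mgen m k) :
    Wker m k x (q * Mgen m k + s)
      = (Mgen m k : ℂ) * (∑ i ∈ Finset.range q, (rademacher m k x) ^ i)
        + (s : ℂ) * (rademacher m k x) ^ q := by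
  have hMk : 0 < Mgen m k := Mgen_pos hm k
  rw [Wker, Finset.sum_range_add, sum_range_mul_comm]
  congr 1
  · rw [Finset.mul_sum]
    apply Finset.sum_congr rfl
    intro u _
    have h1 : ∀ j ∈ Finset.range (Mgen m k), (rademacher m k x) ^ ((u * Mgen m k + j) / Mgen m k)
        = (rademacher m k x) ^ u := by
      intro j hj
      rw [Nat.add_comm, Nat.add_mul_div_right _ _ hMk,
        Nat.div_eq_of_lt (Finset.mem_range.1 hj), Nat.zero_add]
    rw [Finset.sum_congr rfl h1, Finset.sum_const, Finset.card_range, nsmul_eq_mul]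
  · have h1 : ∀ i ∈ Finset.range s, (rademacher m k x) ^ ((q * Mgen m k + i) / Mgen m k)
        = (rademacher m k x) ^ q := by
      intro i hi
      rw [Nat.add_comm, Nat.add_mul_div_right _ _ hMk,
        Nat.div_eq_of_lt (lt_of_lt_of_le (Finset.mem_range.1 hi) hs), Nat.zero_add]
    rw [Finset.sum_congr rfl h1, Finset.sum_const, Finset.card_range, nsmul_eq_mul]

lemma Wker_full (hm : ∀ k, 2 ≤ m k) (hxk : x k ≠ 0) :
    Wker m k x (Mgen m (k+1)) = 0 := by
  have h : Mgen m (k+1) = m k * Mgen m k + 0 := by simp [Mgen]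
  rw [h, Wker_split hm _ _ (Nat.zero_le _), geom_sum_m hm hxk]
  simp

include hm hx hxk in
lemma dirichlet_eq (n : ℕ) :
    vilenkinDirichlet m n x
      = vilenkin m (n / Mgen m (k+1) * Mgen m (k+1)) x * Wker m k x (n % Mgen m (k+1)) := by
  have hM : 0 < Mgen m (k+1) := Mgen_pos hm _
  conv_lhs => rw [vilenkinDirichlet, (Nat.div_add_mod' n (Mgen m (k+1))).symm]
  rw [Finset.sum_range_add, sum_range_mul_comm]
  have h1 : ∀ u ∈ Finset.range (n / Mgen m (k+1)),
      ∑ t ∈ Finset.range (Mgen m (k+1)), vilenkin m (u * Mgen m (k+1) + t) x = 0 := by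
    intro u _
    have : ∀ t ∈ Finset.range (Mgen m (k+1)), vilenkin m (u * Mgen m (k+1) + t) x
        = vilenkin m (u * Mgen m (k+1)) x * (rademacher m k x) ^ (t / Mgen m k) := by
      intro t ht
      exact vilenkin_split hm hx u t (Finset.mem_range.1 ht)
    rw [Finset.sum_congr rfl this, ← Finset.mul_sum, ← Wker, Wker_full hm hxk, mul_zero]
  rw [Finset.sum_congr rfl h1, Finset.sum_const, smul_zero, zero_add]
  have h2 : ∀ i ∈ Finset.range (n % Mgen m (k+1)),
      vilenkin m (n / Mgen m (k+1) * Mgen m (k+1) + i) x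
        = vilenkin m (n / Mgen m (k+1) * Mgen m (k+1)) x * (rademacher m k x) ^ (i / Mgen m k) := by
    intro i hi
    exact vilenkin_split hm hx _ i
      (lt_of_lt_of_le (Finset.mem_range.1 hi) (Nat.mod_lt n hM).le)
  rw [Finset.sum_congr rfl h2, ← Finset.mul_sum, Wker]

end Context2

section Context3

variable (hm : ∀ k, 2 ≤ m k) {k : ℕ} {x : VilGroup m}
  (hx : ∀ j < k, x j = 0) (hxk : x k ≠ 0)

/-- A (crude) uniform bound for the auxiliary kernels. -/
noncomputable def Cbound (m : ℕ → ℕ) (k : ℕ) (x : VilGroup m) : ℝ :=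
  (Mgen m k : ℝ) * (2 / ‖rademacher m k x - 1‖) + (Mgen m k : ℝ)

include hm hxk in
lemma abs_geom_le (q : ℕ) :
    ‖∑ i ∈ Finset.range q, (rademacher m k x) ^ i‖
      ≤ 2 / ‖rademacher m k x - 1‖ := by
  rw [geom_sum_eq (rademacher_ne_one hm hxk), norm_div]
  have hpos : 0 < ‖rademacher m k x - 1‖ :=
    norm_pos_iff.2 (sub_ne_zero.2 (rademacher_ne_one hm hxk))
  have h2 : ‖rademacher m k x ^ q - 1‖ ≤ 2 := by
    have := norm_sub_le (rademacher m k x ^ q) 1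
    simpa [abs_rademacher, one_add_one_eq_two] using this
  gcongr

include hm hxk in
lemma abs_Wker_le (b : ℕ) (hb : b ≤ Mgen m (k+1)) :
    ‖Wker m k x b‖ ≤ Cbound m k x := by
  have hMk : 0 < Mgen m k := Mgen_pos hm k
  have hbb : b = b / Mgen m k * Mgen m k + b % Mgen m k := (Nat.div_add_mod' b _).symm
  rw [hbb, Wker_split hm _ _ (Nat.mod_lt b hMk).le]
  refine le_trans (norm_add_le _ _) ?_
  rw [norm_mul, norm_mul, norm_pow, abs_rademacher, one_pow, mul_one, Complex.norm_natCast,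
    Complex.norm_natCast]
  apply add_le_add
  · exact mul_le_mul_of_nonneg_left (abs_geom_le hm hxk _) (Nat.cast_nonneg _)
  · exact_mod_cast (Nat.mod_lt b hMk).le

end Context3

section Context4

variable (hm : ∀ k, 2 ≤ m k) {k : ℕ} {x : VilGroup m}
  (hx : ∀ j < k, x j = 0) (hxk : x k ≠ 0)

include hm hx hxk in
lemma abs_dirichlet_le (n : ℕ) :
    ‖vilenkinDirichlet m n x‖ ≤ Cbound m k x := by
  rw [dirichlet_eq hm hx hxk n, norm_mul, abs_vilenkin, one_mul]
  exact abs_Wker_le hm hxk _ (Nat.mod_lt n (Mgen_pos hm _)).le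

include hm hx hxk in
lemma abs_fejer_le (n : ℕ) :
    ‖vilenkinFejer m (n + 1) x‖ ≤ Cbound m k x := by
  rw [vilenkinFejer, norm_mul, norm_div, norm_one, Complex.norm_natCast]
  have h1 : ‖∑ j ∈ Finset.range (n+1), vilenkinDirichlet m j x‖
      ≤ ((n:ℝ)+1) * Cbound m k x := by
    refine le_trans (norm_sum_le _ _) ?_
    calc ∑ j ∈ Finset.range (n+1), ‖vilenkinDirichlet m j x‖
        ≤ ∑ _j ∈ Finset.range (n+1), Cbound m k x :=
          Finset.sum_le_sum fun j _ => abs_dirichlet_le hm hx hxk j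
      _ = ((n:ℝ)+1) * Cbound m k x := by
          simp [Finset.sum_const, nsmul_eq_mul]
  have hcast : ((n+1 : ℕ) : ℝ) = (n:ℝ) + 1 := by push_cast; ring
  rw [hcast, div_mul_eq_mul_div, one_mul, div_le_iff₀ (by positivity)]
  calc ‖∑ j ∈ Finset.range (n+1), vilenkinDirichlet m j x‖
      ≤ ((n:ℝ)+1) * Cbound m k x := h1
    _ = Cbound m k x * ((n:ℝ)+1) := by ring

end Context4

section Context5

variable (hm : ∀ k, 2 ≤ m k) {k : ℕ} {x : VilGroup m}
  (hx : ∀ j < k, x j = 0) (hxk : x k ≠ 0)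

include hm hx hxk in
lemma fejer_val :
    vilenkinFejer m (Mgen m (k+1)) x
      = (Mgen m k : ℂ) / (1 - rademacher m k x) := by
  set r := rademacher m k x with hr
  have hMk : 0 < Mgen m k := Mgen_pos hm k
  have hne : r ≠ 1 := rademacher_ne_one hm hxk
  have hsub : (r - 1) ≠ 0 := sub_ne_zero.2 hne
  have hD : ∀ N ∈ Finset.range (Mgen m (k+1)), vilenkinDirichlet m N x = Wker m k x N := by
    intro N hN
    have hlt := Finset.mem_range.1 hN
    rw [dirichlet_eq hm hx hxk N, Nat.div_eq_of_lt hlt, Nat.mod_eq_of_lt hlt, Nat.zero_mul]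
    have h0 : vilenkin m 0 x = 1 := by simp [vilenkin, vDigit]
    rw [h0, one_mul]
  rw [vilenkinFejer, Finset.sum_congr rfl hD,
    show Mgen m (k+1) = m k * Mgen m k from rfl,
    sum_range_mul_comm (fun N => Wker m k x N) (m k) (Mgen m k)]
  have hWs : ∀ q ∈ Finset.range (m k),
      ∑ s ∈ Finset.range (Mgen m k), Wker m k x (q * Mgen m k + s)
      = (Mgen m k : ℂ) * ((Mgen m k : ℂ) * ((r ^ q - 1)/(r - 1)))
        + (∑ s ∈ Finset.range (Mgen m k), (s:ℂ)) * r ^ q := by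
    intro q _
    have h1 : ∀ s ∈ Finset.range (Mgen m k), Wker m k x (q * Mgen m k + s)
        = (Mgen m k : ℂ) * ((r ^ q - 1)/(r - 1)) + (s:ℂ) * r ^ q := by
      intro s hs
      rw [Wker_split hm q s (Finset.mem_range.1 hs).le, geom_sum_eq hne]
    rw [Finset.sum_congr rfl h1, Finset.sum_add_distrib, Finset.sum_const, Finset.card_range,
      nsmul_eq_mul, ← Finset.sum_mul]
  rw [Finset.sum_congr rfl hWs, Finset.sum_add_distrib, ← Finset.mul_sum, ← Finset.mul_sum,
    ← Finset.mul_sum, geom_sum_m hm hxk, mul_zero, add_zero, ← Finset.sum_div,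
    Finset.sum_sub_distrib, geom_sum_m hm hxk, Finset.sum_const, Finset.card_range,
    nsmul_eq_mul, mul_one, zero_sub]
  have hcast : ((m k * Mgen m k : ℕ) : ℂ) = (m k : ℂ) * (Mgen m k : ℂ) := by push_cast; ring
  rw [hcast]
  have hm0 : (m k : ℂ) ≠ 0 := Nat.cast_ne_zero.2 (by have := hm k; omega)
  have hM0 : (Mgen m k : ℂ) ≠ 0 := Nat.cast_ne_zero.2 (by omega)
  have hsub' : (1 - r) ≠ 0 := fun h => hne (by linear_combination -h)
  field_simp
  ring

end Context5

lemma part1 (hm : ∀ k, 2 ≤ m k) (lam : ℕ) (hlam : ∀ k, m k ≤ lam)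
    {x : VilGroup m} {k : ℕ} (hx : ∀ j < k, x j = 0) (hxk : x k ≠ 0) :
    (Mgen m k : ℝ) / (2 * Real.pi * lam)
      ≤ ⨆ n : ℕ, ‖vilenkinFejer m (n + 1) x‖ := by
  have hbdd : BddAbove (Set.range fun n : ℕ => ‖vilenkinFejer m (n + 1) x‖) := by
    refine ⟨Cbound m k x, ?_⟩
    rintro _ ⟨n, rfl⟩
    exact abs_fejer_le hm hx hxk n
  have hM1 : 1 ≤ Mgen m (k+1) := Mgen_pos hm _
  have key : (Mgen m k : ℝ) / (2 * Real.pi * lam)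
      ≤ ‖vilenkinFejer m ((Mgen m (k+1) - 1) + 1) x‖ := by
    rw [Nat.sub_add_cancel hM1, fejer_val hm hx hxk, norm_div, Complex.norm_natCast]
    have h1 : ‖1 - rademacher m k x‖ ≤ 2 := by
      have := norm_sub_le (1:ℂ) (rademacher m k x)
      simpa [abs_rademacher, one_add_one_eq_two] using this
    have h2 : 0 < ‖1 - rademacher m k x‖ := by
      refine norm_pos_iff.2 (sub_ne_zero.2 ?_)
      exact fun h => rademacher_ne_one hm hxk h.symm
    have hlam1 : (2:ℝ) ≤ lam := by
      have := hlam 0; have := hm 0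
      exact_mod_cast by omega
    have h3 : (2:ℝ) ≤ 2 * Real.pi * lam := by nlinarith [Real.pi_gt_three]
    exact div_le_div_of_nonneg_left (Nat.cast_nonneg _) h2 (h1.trans h3)
  exact le_trans key (le_ciSup hbdd (Mgen m (k+1) - 1))

def Ecyl (m : ℕ → ℕ) (k : ℕ) : Set (VilGroup m) := cylV m k \ cylV m (k+1)

lemma measurableSet_cylV (N : ℕ) : MeasurableSet (cylV m N) := by
  have h : cylV m N = ⋂ (j : ℕ) (_ : j < N), (fun y : VilGroup m => y j) ⁻¹' {0} := by
    ext y; simp [cylV, Set.mem_iInter]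
  rw [h]
  exact MeasurableSet.iInter fun j => MeasurableSet.iInter fun _ =>
    (measurable_pi_apply j) (measurableSet_singleton 0)

lemma measurableSet_Ecyl (k : ℕ) : MeasurableSet (Ecyl m k) :=
  (measurableSet_cylV k).diff (measurableSet_cylV (k+1))

lemma cylV_eq (N : ℕ) : cylVAt m N 0 = cylV m N := by
  ext y; simp [cylV, cylVAt]

lemma cylV_anti (N : ℕ) : cylV m (N+1) ⊆ cylV m N := by
  intro y hy j hj
  exact hy j (by omega)

lemma Ecyl_disjoint {i j : ℕ} (hij : i ≠ j) : Disjoint (Ecyl m i) (Ecyl m j) := by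
  wlog h : i < j generalizing i j
  · exact (this hij.symm (by omega)).symm
  rw [Set.disjoint_left]
  rintro y ⟨hy1, hy2⟩ ⟨hy3, _⟩
  exact hy2 fun l hl => hy3 l (by omega)

lemma measure_Ecyl (hm : ∀ k, 2 ≤ m k) {μ : Measure (VilGroup m)} (hμ : IsVilHaar m μ)
    (k : ℕ) :
    (μ (Ecyl m k)).toReal = (Mgen m k : ℝ)⁻¹ - (Mgen m (k+1) : ℝ)⁻¹ := by
  have h1 : μ (cylV m k) = (Mgen m k : ENNReal)⁻¹ := by rw [← cylV_eq]; exact hμ k 0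
  have h2 : μ (cylV m (k+1)) = (Mgen m (k+1) : ENNReal)⁻¹ := by rw [← cylV_eq]; exact hμ (k+1) 0
  have hle : (Mgen m (k+1) : ENNReal)⁻¹ ≤ (Mgen m k : ENNReal)⁻¹ := by
    apply ENNReal.inv_le_inv.2
    exact_mod_cast Nat.cast_le.2 (Nat.le_of_dvd (Mgen_pos hm _) (Mgen_dvd hm (Nat.le_succ k)))
  rw [Ecyl, measure_diff (cylV_anti k) (measurableSet_cylV (k+1)).nullMeasurableSet
    (by rw [h2]; exact ENNReal.inv_ne_top.2 (by exact_mod_cast (Mgen_pos hm (k+1)).ne')),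
    h1, h2, ENNReal.toReal_sub_of_le hle (by simp [(Mgen_pos hm k).ne'])]
  simp [ENNReal.toReal_inv]

lemma part2 (hm : ∀ k, 2 ≤ m k) (lam : ℕ) (hlam : ∀ k, m k ≤ lam)
    (μ : Measure (VilGroup m)) [IsProbabilityMeasure μ] (hμ : IsVilHaar m μ) :
    ¬ ∃ g : VilGroup m → ℝ, Integrable g μ ∧
        ∀ n : ℕ, 0 < n → ∀ x, ‖vilenkinFejer m n x‖ ≤ g x := by
  rintro ⟨g, hgint, hgdom⟩
  have hg0 : ∀ x, 0 ≤ g x := fun x => le_trans (norm_nonneg _) (hgdom 1 one_pos x)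
  have hgE : ∀ k : ℕ, ∀ x ∈ Ecyl m k, (Mgen m k : ℝ)/(2*Real.pi*lam) ≤ g x := by
    intro k x hxE
    obtain ⟨hx1, hx2⟩ := hxE
    have hxk : x k ≠ 0 := by
      intro h
      exact hx2 fun l hl => by
        rcases Nat.lt_succ_iff_lt_or_eq.1 hl with h' | h'
        exacts [hx1 l h', h' ▸ h]
    exact le_trans (part1 hm lam hlam hx1 hxk)
      (ciSup_le fun n => hgdom (n+1) (Nat.succ_pos n) x)
  have hlam2 : (2:ℝ) ≤ lam := by have h1 := hlam 0; have h2 := hm 0; exact_mod_cast by omega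
  have hpi : (0:ℝ) < 2*Real.pi*lam := by nlinarith [Real.pi_gt_three]
  have h4 : (0:ℝ) < 4*Real.pi*lam := by nlinarith [Real.pi_gt_three]
  have hKey : ∀ K : ℕ, (K:ℝ) * (4*Real.pi*lam)⁻¹ ≤ ∫ x, g x ∂μ := by
    intro K
    have hsum : ∑ k ∈ Finset.range K, ∫ x in Ecyl m k, g x ∂μ ≤ ∫ x, g x ∂μ := by
      rw [← MeasureTheory.integral_biUnion_finset (Finset.range K)
        (fun k _ => measurableSet_Ecyl k)
        (fun i _ j _ hij => Ecyl_disjoint hij)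
        (fun k _ => hgint.integrableOn)]
      exact setIntegral_le_integral hgint (Filter.Eventually.of_forall hg0)
    have hpiece : ∀ k ∈ Finset.range K, (4*Real.pi*lam)⁻¹ ≤ ∫ x in Ecyl m k, g x ∂μ := by
      intro k _
      have h1 := MeasureTheory.setIntegral_ge_of_const_le (measurableSet_Ecyl k)
        (measure_ne_top μ _) (hgE k) hgint.integrableOn
      refine le_trans ?_ h1
      rw [measureReal_def, measure_Ecyl hm hμ k, smul_eq_mul,
        mul_comm ((Mgen m k:ℝ)⁻¹ - (Mgen m (k+1):ℝ)⁻¹)]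
      have hMk : (0:ℝ) < Mgen m k := by exact_mod_cast Mgen_pos hm k
      have hstep : (Mgen m (k+1):ℝ) = (m k : ℝ) * Mgen m k := by exact_mod_cast rfl
      have hmk2 : (2:ℝ) ≤ m k := by exact_mod_cast hm k
      have h2 : (2 * (Mgen m k:ℝ))⁻¹ ≤ (Mgen m k:ℝ)⁻¹ - (Mgen m (k+1):ℝ)⁻¹ := by
        rw [hstep, mul_inv, mul_inv]
        have hmkinv : (m k:ℝ)⁻¹ ≤ 2⁻¹ := by
          exact inv_anti₀ (by norm_num) hmk2
        have hMinv : (0:ℝ) < (Mgen m k:ℝ)⁻¹ := by positivity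
        nlinarith
      calc (4*Real.pi*lam)⁻¹
          = (Mgen m k:ℝ)/(2*Real.pi*lam) * (2 * (Mgen m k:ℝ))⁻¹ := by
            field_simp
            ring
        _ ≤ (Mgen m k:ℝ)/(2*Real.pi*lam) * ((Mgen m k:ℝ)⁻¹ - (Mgen m (k+1):ℝ)⁻¹) := by
            apply mul_le_mul_of_nonneg_left h2 (by positivity)
    calc (K:ℝ) * (4*Real.pi*lam)⁻¹
        = ∑ _k ∈ Finset.range K, (4*Real.pi*lam)⁻¹ := by
          simp [Finset.sum_const, nsmul_eq_mul]
      _ ≤ ∑ k ∈ Finset.range K, ∫ x in Ecyl m k, g x ∂μ := Finset.sum_le_sum hpiece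
      _ ≤ ∫ x, g x ∂μ := hsum
  obtain ⟨K, hK⟩ := exists_nat_gt ((4*Real.pi*lam) * ∫ x, g x ∂μ)
  have hKle := hKey K
  rw [← div_eq_mul_inv, div_le_iff₀ h4] at hKle
  nlinarith


/-- **The Vilenkin-Fejér kernels have no integrable upper envelope.**
On a bounded Vilenkin group with `λ = sup_n m_n`, for every nonzero `x` (say
`x ∈ I_k \ I_{k+1}`, so that `|x| = M_k⁻¹`) one has
`sup_n |K_n^ψ(x)| ≥ (2πλ|x|)⁻¹ = M_k/(2πλ)`; consequently there is no integrable
function dominating all the kernels `K_n^ψ`. -/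
theorem vilenkinFejer_no_integrable_envelope
    (m : ℕ → ℕ) (hm : ∀ k, 2 ≤ m k) (lam : ℕ) (hlam : ∀ k, m k ≤ lam)
    (μ : Measure (VilGroup m)) [IsProbabilityMeasure μ] (hμ : IsVilHaar m μ) :
    (∀ (x : VilGroup m) (k : ℕ), (∀ j < k, x j = 0) → x k ≠ 0 →
      (Mgen m k : ℝ) / (2 * Real.pi * lam) ≤
        ⨆ n : ℕ, ‖vilenkinFejer m (n + 1) x‖) ∧
      ¬ ∃ g : VilGroup m → ℝ, Integrable g μ ∧
          ∀ n : ℕ, 0 < n → ∀ x, ‖vilenkinFejer m n x‖ ≤ g x := by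
  exact ⟨fun x k hx hxk => part1 hm lam hlam hx hxk, part2 hm lam hlam μ hμ⟩
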